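/- Let n ≥ 1. For distinct i, j ∈ Fin (n+1), let b_{ij} ∈ ℝ^(2^n − 1) be the vector indexed by nonempty subsets I ⊆ Fin n whose I-th coordinate is 1 if exactly one of i and j lies in I (where I is viewed as a subset of Fin (n+1) via the natural embedding) and 0 otherwise. Then the (n+1 choose 2) vectors b_{ij} are linearly independent. -/

import Mathlib

/-- The Bell entropy vector `b_{ij}` for `i, j ∈ Fin (n+1)`, recorded on the nonempty
subsets `I ⊆ Fin n` (viewed inside `Fin (n+1)` via the natural embedding `Fin.castSucc`):
its `I`-th coordinate is `1` if exactly one of `i, j` lies in `I`, and `0` otherwise. -/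
def bellVec (n : ℕ) (i j : Fin (n + 1)) : {I : Finset (Fin n) // I.Nonempty} → ℝ :=
  fun I =>
    if Xor (i ∈ I.1.map ⟨Fin.castSucc, Fin.castSucc_injective n⟩)
        (j ∈ I.1.map ⟨Fin.castSucc, Fin.castSucc_injective n⟩) then 1 else 0

/-- Index type of ordered pairs. -/
abbrev BP (n : ℕ) := {p : Fin (n + 1) × Fin (n + 1) // p.1 < p.2}

/-- For `n ≥ 1`, the `(n+1 choose 2)` Bell vectors `b_{ij}`
(for distinct `i, j ∈ Fin (n+1)`) are linearly independent. -/
theorem bellVec_linearIndependent (n : ℕ) (hn : 1 ≤ n) :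
    LinearIndependent ℝ
      (fun p : {p : Fin (n + 1) × Fin (n + 1) // p.1 < p.2} =>
        bellVec n p.1.1 p.1.2) := by
  classical
  rw [Fintype.linearIndependent_iff]
  intro g hg
  -- coordinate equations
  have E : ∀ I : {I : Finset (Fin n) // I.Nonempty},
      ∑ p : BP n, (if Xor (p.1.1 ∈ I.1.map ⟨Fin.castSucc, Fin.castSucc_injective n⟩)
          (p.1.2 ∈ I.1.map ⟨Fin.castSucc, Fin.castSucc_injective n⟩) then g p else 0) = 0 := by
    intro I
    have h := congrFun hg I
    simpa only [Finset.sum_apply, Pi.smul_apply, Pi.zero_apply, bellVec, smul_eq_mul,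
      mul_ite, mul_one, mul_zero] using h
  -- singleton equations
  have E1 : ∀ k : Fin n,
      ∑ p : BP n, (if p.1.1 = k.castSucc ∨ p.1.2 = k.castSucc then g p else 0) = 0 := by
    intro k
    have h := E ⟨{k}, Finset.singleton_nonempty k⟩
    have hmem : ∀ x : Fin (n + 1),
        (x ∈ ({k} : Finset (Fin n)).map ⟨Fin.castSucc, Fin.castSucc_injective n⟩) ↔
          x = k.castSucc := by
      intro x
      simp only [Finset.mem_map, Finset.mem_singleton, Function.Embedding.coeFn_mk]
      constructor
      · rintro ⟨a, rfl, rfl⟩; rfl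
      · rintro rfl; exact ⟨k, rfl, rfl⟩
    calc ∑ p : BP n, (if p.1.1 = k.castSucc ∨ p.1.2 = k.castSucc then g p else 0)
        = ∑ p : BP n,
            (if Xor (p.1.1 ∈ ({k} : Finset (Fin n)).map
                ⟨Fin.castSucc, Fin.castSucc_injective n⟩)
              (p.1.2 ∈ ({k} : Finset (Fin n)).map
                ⟨Fin.castSucc, Fin.castSucc_injective n⟩) then g p else 0) := by
          refine Finset.sum_congr rfl fun p _ => ?_
          have hij : p.1.1 ≠ p.1.2 := ne_of_lt p.2
          refine if_congr ?_ rfl rfl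
          rw [hmem, hmem]
          simp only [Xor]
          constructor
          · rintro (ha | hb)
            · exact Or.inl ⟨ha, fun hb => hij (ha.trans hb.symm)⟩
            · exact Or.inr ⟨hb, fun ha => hij (ha.trans hb.symm)⟩
          · rintro (⟨ha, -⟩ | ⟨hb, -⟩)
            · exact Or.inl ha
            · exact Or.inr hb
      _ = 0 := h
  -- pair equations
  have E2 : ∀ k l : Fin n,
      ∑ p : BP n, (if Xor (p.1.1 = k.castSucc ∨ p.1.1 = l.castSucc)
          (p.1.2 = k.castSucc ∨ p.1.2 = l.castSucc) then g p else 0) = 0 := by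
    intro k l
    have h := E ⟨{k, l}, Finset.insert_nonempty k {l}⟩
    have hmem : ∀ x : Fin (n + 1),
        (x ∈ ({k, l} : Finset (Fin n)).map ⟨Fin.castSucc, Fin.castSucc_injective n⟩) ↔
          (x = k.castSucc ∨ x = l.castSucc) := by
      intro x
      simp only [Finset.mem_map, Finset.mem_insert, Finset.mem_singleton,
        Function.Embedding.coeFn_mk]
      constructor
      · rintro ⟨a, (rfl | rfl), rfl⟩
        · exact Or.inl rfl
        · exact Or.inr rfl
      · rintro (rfl | rfl)
        · exact ⟨k, Or.inl rfl, rfl⟩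
        · exact ⟨l, Or.inr rfl, rfl⟩
    calc ∑ p : BP n, (if Xor (p.1.1 = k.castSucc ∨ p.1.1 = l.castSucc)
            (p.1.2 = k.castSucc ∨ p.1.2 = l.castSucc) then g p else 0)
        = ∑ p : BP n,
            (if Xor (p.1.1 ∈ ({k, l} : Finset (Fin n)).map
                ⟨Fin.castSucc, Fin.castSucc_injective n⟩)
              (p.1.2 ∈ ({k, l} : Finset (Fin n)).map
                ⟨Fin.castSucc, Fin.castSucc_injective n⟩) then g p else 0) := by
          refine Finset.sum_congr rfl fun p _ => ?_
          exact if_congr (by rw [hmem, hmem]) rfl rfl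
      _ = 0 := h
  -- Step A: coefficients of pairs of non-last elements vanish
  have stepA : ∀ (k l : Fin n) (h : (k.castSucc : Fin (n+1)) < l.castSucc),
      g ⟨(k.castSucc, l.castSucc), h⟩ = 0 := by
    intro k l h
    have hkl : (k.castSucc : Fin (n+1)) ≠ l.castSucc := ne_of_lt h
    have comb : ∑ p : BP n,
        ((if p.1.1 = k.castSucc ∨ p.1.2 = k.castSucc then g p else 0)
          + (if p.1.1 = l.castSucc ∨ p.1.2 = l.castSucc then g p else 0)
          - (if Xor (p.1.1 = k.castSucc ∨ p.1.1 = l.castSucc)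
              (p.1.2 = k.castSucc ∨ p.1.2 = l.castSucc) then g p else 0)) = 0 := by
      rw [Finset.sum_sub_distrib, Finset.sum_add_distrib, E1 k, E1 l, E2 k l]
      ring
    have key : ∀ (i j : Fin (n+1)) (hij : i < j),
        ((if i = k.castSucc ∨ j = k.castSucc then g ⟨(i, j), hij⟩ else 0)
          + (if i = l.castSucc ∨ j = l.castSucc then g ⟨(i, j), hij⟩ else 0)
          - (if Xor (i = k.castSucc ∨ i = l.castSucc)
              (j = k.castSucc ∨ j = l.castSucc) then g ⟨(i, j), hij⟩ else 0))
          = if (⟨(i, j), hij⟩ : BP n) = ⟨(k.castSucc, l.castSucc), h⟩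
              then 2 * g ⟨(i, j), hij⟩ else 0 := by
      intro i j hij
      have hne : i ≠ j := ne_of_lt hij
      have hpe : ((⟨(i, j), hij⟩ : BP n) = ⟨(k.castSucc, l.castSucc), h⟩) ↔
          (i = k.castSucc ∧ j = l.castSucc) := by
        simp [Subtype.ext_iff, Prod.ext_iff]
      by_cases h1 : i = k.castSucc <;> by_cases h2 : i = l.castSucc <;>
        by_cases h3 : j = k.castSucc <;> by_cases h4 : j = l.castSucc
      all_goals try { exact absurd (h1.symm.trans h2) hkl }
      all_goals try { exact absurd (h3.symm.trans h4) hkl }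
      all_goals try { exact absurd (h1.trans h3.symm) hne }
      all_goals try { exact absurd (h2.trans h4.symm) hne }
      -- case h1, h4 : this is the pair (k, l)
      · rw [if_pos (Or.inl h1), if_pos (Or.inr h4),
          if_neg (show ¬ Xor _ _ by
            rintro (⟨-, hb⟩ | ⟨-, ha⟩)
            · exact hb (Or.inr h4)
            · exact ha (Or.inl h1)),
          if_pos (hpe.mpr ⟨h1, h4⟩)]
        ring
      -- case h1 only
      · rw [if_pos (Or.inl h1),
          if_neg (show ¬(i = l.castSucc ∨ j = l.castSucc) by
            rintro (hh | hh); exacts [h2 hh, h4 hh]),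
          if_pos (show Xor _ _ from Or.inl ⟨Or.inl h1, by
            rintro (hh | hh); exacts [h3 hh, h4 hh]⟩),
          if_neg (fun hp => h4 (hpe.mp hp).2)]
        ring
      -- case h2, h3 : contradicts ordering
      · exfalso
        rw [h2, h3] at hij
        exact lt_asymm h hij
      -- case h2 only
      · rw [if_neg (show ¬(i = k.castSucc ∨ j = k.castSucc) by
            rintro (hh | hh); exacts [h1 hh, h3 hh]),
          if_pos (Or.inl h2),
          if_pos (show Xor _ _ from Or.inl ⟨Or.inr h2, by
            rintro (hh | hh); exacts [h3 hh, h4 hh]⟩),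
          if_neg (fun hp => h1 (hpe.mp hp).1)]
        ring
      -- case h3 only
      · rw [if_pos (Or.inr h3),
          if_neg (show ¬(i = l.castSucc ∨ j = l.castSucc) by
            rintro (hh | hh); exacts [h2 hh, h4 hh]),
          if_pos (show Xor _ _ from Or.inr ⟨Or.inl h3, by
            rintro (hh | hh); exacts [h1 hh, h2 hh]⟩),
          if_neg (fun hp => h1 (hpe.mp hp).1)]
        ring
      -- case h4 only
      · rw [if_neg (show ¬(i = k.castSucc ∨ j = k.castSucc) by
            rintro (hh | hh); exacts [h1 hh, h3 hh]),
          if_pos (Or.inr h4),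
          if_pos (show Xor _ _ from Or.inr ⟨Or.inr h4, by
            rintro (hh | hh); exacts [h1 hh, h2 hh]⟩),
          if_neg (fun hp => h1 (hpe.mp hp).1)]
        ring
      -- case none
      · rw [if_neg (show ¬(i = k.castSucc ∨ j = k.castSucc) by
            rintro (hh | hh); exacts [h1 hh, h3 hh]),
          if_neg (show ¬(i = l.castSucc ∨ j = l.castSucc) by
            rintro (hh | hh); exacts [h2 hh, h4 hh]),
          if_neg (show ¬ Xor _ _ by
            rintro (⟨(hh | hh), -⟩ | ⟨(hh | hh), -⟩)
            exacts [h1 hh, h2 hh, h3 hh, h4 hh]),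
          if_neg (fun hp => h1 (hpe.mp hp).1)]
        ring
    rw [Finset.sum_congr rfl (fun p _ => key p.1.1 p.1.2 p.2),
      Finset.sum_ite_eq' Finset.univ (⟨(k.castSucc, l.castSucc), h⟩ : BP n)
        (fun p => 2 * g p)] at comb
    simp only [Finset.mem_univ, if_true] at comb
    linarith
  -- Step B: coefficients of pairs with the last element vanish
  have stepB : ∀ k : Fin n,
      g ⟨(k.castSucc, Fin.last n), Fin.castSucc_lt_last k⟩ = 0 := by
    intro k
    have h := E1 k
    have key : ∀ (i j : Fin (n+1)) (hij : i < j),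
        (if i = k.castSucc ∨ j = k.castSucc then g ⟨(i, j), hij⟩ else 0)
          = if (⟨(i, j), hij⟩ : BP n) = ⟨(k.castSucc, Fin.last n), Fin.castSucc_lt_last k⟩
              then g ⟨(i, j), hij⟩ else 0 := by
      intro i j hij
      have hpe : ((⟨(i, j), hij⟩ : BP n)
            = ⟨(k.castSucc, Fin.last n), Fin.castSucc_lt_last k⟩) ↔
          (i = k.castSucc ∧ j = Fin.last n) := by
        simp [Subtype.ext_iff, Prod.ext_iff]
      by_cases hc : i = k.castSucc ∨ j = k.castSucc
      · rcases hc with h1 | h2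
        · by_cases hj : j = Fin.last n
          · rw [if_pos (Or.inl h1), if_pos (hpe.mpr ⟨h1, hj⟩)]
          · obtain ⟨l, hl⟩ := Fin.exists_castSucc_eq.mpr hj
            have hlt : (k.castSucc : Fin (n+1)) < l.castSucc := by
              rw [hl]; exact h1 ▸ hij
            have hgp : g ⟨(i, j), hij⟩ = 0 := by
              have heq : (⟨(i, j), hij⟩ : BP n) = ⟨(k.castSucc, l.castSucc), hlt⟩ := by
                simp [Subtype.ext_iff, Prod.ext_iff, h1, hl.symm]
              rw [heq]; exact stepA k l hlt
            rw [if_pos (Or.inl h1), if_neg (fun hp => hj (hpe.mp hp).2), hgp]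
        · have hjne : j ≠ Fin.last n := by
            rw [h2]; exact ne_of_lt (Fin.castSucc_lt_last k)
          have hine : i ≠ Fin.last n :=
            ne_of_lt (hij.trans (lt_of_le_of_ne (Fin.le_last j) hjne))
          obtain ⟨m, hm⟩ := Fin.exists_castSucc_eq.mpr hine
          have hlt : (m.castSucc : Fin (n+1)) < k.castSucc := by
            rw [hm]; exact h2 ▸ hij
          have hgp : g ⟨(i, j), hij⟩ = 0 := by
            have heq : (⟨(i, j), hij⟩ : BP n) = ⟨(m.castSucc, k.castSucc), hlt⟩ := by
              simp [Subtype.ext_iff, Prod.ext_iff, hm.symm, h2]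
            rw [heq]; exact stepA m k hlt
          rw [if_pos (Or.inr h2), if_neg (fun hp => hjne (hpe.mp hp).2), hgp]
      · rw [if_neg hc, if_neg (fun hp => hc (Or.inl (hpe.mp hp).1))]
    rw [Finset.sum_congr rfl (fun p _ => key p.1.1 p.1.2 p.2),
      Finset.sum_ite_eq' Finset.univ
        (⟨(k.castSucc, Fin.last n), Fin.castSucc_lt_last k⟩ : BP n) (fun p => g p)] at h
    simpa using h
  -- conclude
  rintro ⟨⟨i, j⟩, hij⟩
  by_cases hj : j = Fin.last n
  · have hine : i ≠ Fin.last n := hj ▸ ne_of_lt hij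
    obtain ⟨k, hk⟩ := Fin.exists_castSucc_eq.mpr hine
    have heq : (⟨(i, j), hij⟩ : BP n)
        = ⟨(k.castSucc, Fin.last n), Fin.castSucc_lt_last k⟩ := by
      simp [Subtype.ext_iff, Prod.ext_iff, hk.symm, hj]
    rw [heq]; exact stepB k
  · obtain ⟨l, hl⟩ := Fin.exists_castSucc_eq.mpr hj
    have hine : i ≠ Fin.last n :=
      ne_of_lt (hij.trans (lt_of_le_of_ne (Fin.le_last j) hj))
    obtain ⟨k, hk⟩ := Fin.exists_castSucc_eq.mpr hine
    have hlt : (k.castSucc : Fin (n+1)) < l.castSucc := by rw [hk, hl]; exact hij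
    have heq : (⟨(i, j), hij⟩ : BP n) = ⟨(k.castSucc, l.castSucc), hlt⟩ := by
      simp [Subtype.ext_iff, Prod.ext_iff, hk.symm, hl.symm]
    rw [heq]; exact stepA k l hlt
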